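/- Clausen's identity: for real a, b with a+b+1/2 not a nonpositive integer and |z| < 1, the square of ∑_{n=0}^∞ ((a)_n (b)_n)/((a+b+1/2)_n (1)_n) zⁿ equals ∑_{n=0}^∞ ((2a)_n (2b)_n (a+b)_n)/((a+b+1/2)_n (2a+2b)_n (1)_n) zⁿ. -/
import Mathlib


open Real

noncomputable def poch (a : ℝ) (n : ℕ) : ℝ := (ascPochhammer ℝ n).eval a

lemma poch_zero' (x : ℝ) : poch x 0 = 1 := by simp [poch]

lemma poch_succ' (x : ℝ) (n : ℕ) : poch x (n+1) = poch x n * (x + n) := by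
  simp [poch, ascPochhammer_succ_right]

lemma poch_one_ne (n : ℕ) : poch 1 n ≠ 0 := by
  induction n with
  | zero => simp [poch_zero']
  | succ n ih =>
      rw [poch_succ']
      exact mul_ne_zero ih (by positivity)

/-- the term of the ₂F₁ series -/
noncomputable def Acl (a b : ℝ) (k : ℕ) : ℝ :=
  poch a k * poch b k / (poch (a + b + 1/2) k * poch 1 k)

/-- the term of the ₃F₂ series -/
noncomputable def Bcl (a b : ℝ) (n : ℕ) : ℝ :=
  poch (2*a) n * poch (2*b) n * poch (a+b) n /
    (poch (a + b + 1/2) n * poch (2*a + 2*b) n * poch 1 n)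

/-- numerator of the contiguous ratio -/
noncomputable def Pcl (a b n : ℝ) : ℝ := (2*a + n) * (2*b + n) * (a + b + n)

/-- denominator of the contiguous ratio -/
noncomputable def Qcl (a b n : ℝ) : ℝ := (a + b + 1/2 + n) * (2*a + 2*b + n) * (n + 1)

/-- the Zeilberger certificate -/
noncomputable def gcl (a b n k : ℝ) : ℝ :=
  k * (2*k^2 - 3*(n+1)*k + (1 + 3*n/2 - (a+b)*(1+3*n) - 2*(a+b)^2))

set_option maxHeartbeats 1600000 in
set_option maxRecDepth 8000 in
theorem stmt_19 (a b z : ℝ)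
    (hab : ∀ m : ℕ, a + b + 1/2 ≠ -(m : ℝ))
    (hz : |z| < 1)
    (hden1 : ∀ n : ℕ, poch (a + b + 1/2) n ≠ 0)
    (hden2 : ∀ n : ℕ, poch (2*a + 2*b) n ≠ 0)
    (hsum1 : Summable (fun n : ℕ => |poch a n * poch b n / (poch (a + b + 1/2) n * poch 1 n) * z^n|))
    (hsum2 : Summable (fun n : ℕ => |poch (2*a) n * poch (2*b) n * poch (a+b) n / (poch (a + b + 1/2) n * poch (2*a + 2*b) n * poch 1 n) * z^n|)) :
    (∑' n : ℕ, poch a n * poch b n / (poch (a + b + 1/2) n * poch 1 n) * z^n)^2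
      = ∑' n : ℕ, poch (2*a) n * poch (2*b) n * poch (a+b) n / (poch (a + b + 1/2) n * poch (2*a + 2*b) n * poch 1 n) * z^n := by
  -- nonvanishing of the shifted denominators
  have hc : ∀ m : ℕ, a + b + 1/2 + (m:ℝ) ≠ 0 := by
    intro m
    have h := hden1 (m+1)
    rw [poch_succ'] at h
    exact (mul_ne_zero_iff.mp h).2
  have hd : ∀ m : ℕ, 2*a + 2*b + (m:ℝ) ≠ 0 := by
    intro m
    have h := hden2 (m+1)
    rw [poch_succ'] at h
    exact (mul_ne_zero_iff.mp h).2
  have hnat : ∀ m : ℕ, ((m:ℝ) + 1) ≠ 0 := by intro m; positivity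
  -- the step relation for A
  have hA : ∀ j : ℕ, Acl a b (j+1)
      = Acl a b j * ((a + j) * (b + j)) / ((a + b + 1/2 + j) * ((j:ℝ) + 1)) := by
    intro j
    rw [Acl, Acl, poch_succ', poch_succ', poch_succ', poch_succ']
    field_simp
    ring
  -- the certified per-term identity
  have key : ∀ k m : ℕ,
      Qcl a b (k+m) * (Acl a b k * Acl a b (m+1))
        = Pcl a b (k+m) * (Acl a b k * Acl a b m)
          + (gcl a b (k+m) ((k:ℝ)+1) * (Acl a b (k+1) * Acl a b m)
             - gcl a b (k+m) k * (Acl a b k * Acl a b (m+1))) := by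
    intro k m
    rw [hA k, hA m]
    set dk : ℝ := (a + b + 1/2 + (k:ℝ)) * ((k:ℝ) + 1) with hdk
    set dm : ℝ := (a + b + 1/2 + (m:ℝ)) * ((m:ℝ) + 1) with hdm
    set q : ℝ := Qcl a b (k+m) with hq
    set p : ℝ := Pcl a b (k+m) with hp
    set g1 : ℝ := gcl a b (k+m) ((k:ℝ)+1) with hg1
    set g0 : ℝ := gcl a b (k+m) (k:ℝ) with hg0
    set X : ℝ := Acl a b k
    set Y : ℝ := Acl a b m
    set u : ℝ := (a+(m:ℝ))*(b+(m:ℝ)) with hu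
    set v : ℝ := (a+(k:ℝ))*(b+(k:ℝ)) with hv
    have hdk0 : dk ≠ 0 := mul_ne_zero (hc k) (hnat k)
    have hdm0 : dm ≠ 0 := mul_ne_zero (hc m) (hnat m)
    have hdk1 : dk * dk⁻¹ = 1 := mul_inv_cancel₀ hdk0
    have hdm1 : dm * dm⁻¹ = 1 := mul_inv_cancel₀ hdm0
    have hpoly : q * u * dk = p * (dm*dk) + (g1 * v * dm - g0 * u * dk) := by
      rw [hdk, hdm, hq, hp, hg1, hg0, hu, hv]
      simp only [Qcl, Pcl, gcl]
      push_cast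
      ring
    linear_combination (X*Y*dm⁻¹*dk⁻¹) * hpoly
      + (g1*X*v*Y*dk⁻¹ + p*X*Y*dk*dk⁻¹) * hdm1
      + (p*X*Y - q*u*X*Y*dm⁻¹ - g0*u*X*Y*dm⁻¹) * hdk1
  -- the partial-sum recurrence
  set S : ℕ → ℝ := fun n => ∑ k ∈ Finset.range (n+1), Acl a b k * Acl a b (n - k) with hS
  have hrec : ∀ n : ℕ, Qcl a b n * S (n+1) = Pcl a b n * S n := by
    intro n
    have e1 : S (n+1) = (∑ k ∈ Finset.range (n+1), Acl a b k * Acl a b (n+1-k))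
        + Acl a b (n+1) * Acl a b 0 := by
      rw [hS]
      simp [Finset.sum_range_succ]
    have e2 : ∀ k ∈ Finset.range (n+1),
        Qcl a b n * (Acl a b k * Acl a b (n+1-k))
          = Pcl a b n * (Acl a b k * Acl a b (n-k))
            + ((fun j : ℕ => gcl a b n j * (Acl a b j * Acl a b (n+1-j))) (k+1)
               - (fun j : ℕ => gcl a b n j * (Acl a b j * Acl a b (n+1-j))) k) := by
      intro k hk
      have hkn : k ≤ n := Nat.lt_succ_iff.mp (Finset.mem_range.mp hk)
      obtain ⟨m, rfl⟩ : ∃ m, n = k + m := ⟨n - k, (Nat.add_sub_cancel' hkn).symm⟩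
      have hm1 : k + m + 1 - k = m + 1 := by omega
      have hm2 : k + m - k = m := by omega
      have hm3 : k + m + 1 - (k + 1) = m := by omega
      simp only [hm1, hm2, hm3]
      push_cast
      exact key k m
    calc Qcl a b n * S (n+1)
        = (∑ k ∈ Finset.range (n+1), Qcl a b n * (Acl a b k * Acl a b (n+1-k)))
            + Qcl a b n * (Acl a b (n+1) * Acl a b 0) := by
          rw [e1, mul_add, Finset.mul_sum]
      _ = (∑ k ∈ Finset.range (n+1),
            (Pcl a b n * (Acl a b k * Acl a b (n-k))
              + ((fun j : ℕ => gcl a b n j * (Acl a b j * Acl a b (n+1-j))) (k+1)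
                 - (fun j : ℕ => gcl a b n j * (Acl a b j * Acl a b (n+1-j))) k)))
            + Qcl a b n * (Acl a b (n+1) * Acl a b 0) := by
          rw [Finset.sum_congr rfl e2]
      _ = Pcl a b n * S n
            + ((fun j : ℕ => gcl a b n j * (Acl a b j * Acl a b (n+1-j))) (n+1)
               - (fun j : ℕ => gcl a b n j * (Acl a b j * Acl a b (n+1-j))) 0)
            + Qcl a b n * (Acl a b (n+1) * Acl a b 0) := by
          rw [Finset.sum_add_distrib, Finset.sum_range_sub
            (fun j : ℕ => gcl a b n j * (Acl a b j * Acl a b (n+1-j))), hS,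
            ← Finset.mul_sum]
      _ = Pcl a b n * S n := by
          have hg0 : gcl a b n (0:ℕ) = 0 := by simp [gcl]
          have hgb : gcl a b n ((n:ℝ)+1) = - Qcl a b n := by
            rw [gcl, Qcl]; ring
          simp only [hg0, Nat.add_sub_cancel, Nat.sub_self]
          push_cast [hgb]
          ring
  -- nonvanishing of Q
  have hQ : ∀ n : ℕ, Qcl a b n ≠ 0 := fun n =>
    mul_ne_zero (mul_ne_zero (hc n) (hd n)) (hnat n)
  -- B satisfies the same recurrence
  have hBrec : ∀ n : ℕ, Qcl a b n * Bcl a b (n+1) = Pcl a b n * Bcl a b n := by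
    intro n
    rw [Bcl, Bcl, poch_succ', poch_succ', poch_succ', poch_succ', poch_succ', poch_succ',
      Qcl, Pcl]
    set C0 : ℝ := poch (a + b + 1/2) n with hC0
    set D2 : ℝ := poch (2*a + 2*b) n with hD2
    set F1 : ℝ := poch 1 n with hF1
    set e1 : ℝ := a + b + 1/2 + (n:ℝ) with he1d
    set e2 : ℝ := 2*a + 2*b + (n:ℝ) with he2d
    set e3 : ℝ := (1:ℝ) + (n:ℝ) with he3d
    have he1 : e1 * e1⁻¹ = 1 := mul_inv_cancel₀ (hc n)
    have he2 : e2 * e2⁻¹ = 1 := mul_inv_cancel₀ (hd n)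
    have he3 : e3 * e3⁻¹ = 1 := mul_inv_cancel₀ (by rw [he3d]; intro h; exact hnat n (by linarith))
    set W : ℝ := (2*a+(n:ℝ))*(2*b+(n:ℝ))*(a+b+(n:ℝ)) * (poch (2*a) n * poch (2*b) n * poch (a+b) n) * (C0⁻¹*D2⁻¹*F1⁻¹) with hW
    simp only [div_eq_mul_inv, mul_inv]
    linear_combination (W*e2*e2⁻¹*e3*e3⁻¹) * he1 + (W*e3*e3⁻¹) * he2 + W * he3
  -- hence the coefficients agree
  have hSB : ∀ n : ℕ, S n = Bcl a b n := by
    intro n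
    induction n with
    | zero =>
        simp [hS, Acl, Bcl, poch_zero']
    | succ n ih =>
        have := hrec n
        rw [ih, ← hBrec n] at this
        exact mul_left_cancel₀ (hQ n) this
  -- Cauchy product
  have hnorm : Summable fun n : ℕ => ‖Acl a b n * z^n‖ := by
    simp only [Real.norm_eq_abs]
    exact hsum1
  have hcauchy :
      ((∑' n : ℕ, Acl a b n * z^n) * ∑' n : ℕ, Acl a b n * z^n)
        = ∑' n : ℕ, ∑ k ∈ Finset.range (n+1), (Acl a b k * z^k) * (Acl a b (n-k) * z^(n-k)) :=
    tsum_mul_tsum_eq_tsum_sum_range_of_summable_norm hnorm hnorm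
  have hterm : ∀ n : ℕ,
      (∑ k ∈ Finset.range (n+1), (Acl a b k * z^k) * (Acl a b (n-k) * z^(n-k)))
        = Bcl a b n * z^n := by
    intro n
    have : ∀ k ∈ Finset.range (n+1),
        (Acl a b k * z^k) * (Acl a b (n-k) * z^(n-k)) = (Acl a b k * Acl a b (n-k)) * z^n := by
      intro k hk
      have hkn : k ≤ n := Nat.lt_succ_iff.mp (Finset.mem_range.mp hk)
      rw [show (Acl a b k * z^k) * (Acl a b (n-k) * z^(n-k))
          = (Acl a b k * Acl a b (n-k)) * (z^k * z^(n-k)) by ring,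
        ← pow_add, Nat.add_sub_cancel' hkn]
    rw [Finset.sum_congr rfl this, ← Finset.sum_mul,
      show (∑ k ∈ Finset.range (n+1), Acl a b k * Acl a b (n - k)) = Bcl a b n from hSB n]
  calc (∑' n : ℕ, poch a n * poch b n / (poch (a + b + 1/2) n * poch 1 n) * z^n)^2
      = (∑' n : ℕ, Acl a b n * z^n) * ∑' n : ℕ, Acl a b n * z^n := by
        rw [sq]; rfl
    _ = ∑' n : ℕ, ∑ k ∈ Finset.range (n+1), (Acl a b k * z^k) * (Acl a b (n-k) * z^(n-k)) :=
        hcauchy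
    _ = ∑' n : ℕ, Bcl a b n * z^n := tsum_congr hterm
    _ = _ := by rfl
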